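/- Let K : ℝ² → ℝ be continuously differentiable and let x, y : I → ℝ be twice differentiable on an open interval I with x'(s) > 0 and y'(s) > 0 for all s ∈ I, satisfying the geodesic-type system x''(s) = −K_x(x(s),y(s))·(x'(s))² and y''(s) = K_y(x(s),y(s))·(y'(s))². Then the function s ↦ log(y'(s)) − log(x'(s)) − K(x(s),y(s)) is constant on I. In particular, if y'(s₀) = exp(K(x(s₀),y(s₀)))·x'(s₀) for some s₀ ∈ I, then y'(s) = exp(K(x(s),y(s)))·x'(s) for all s ∈ I. -/

import Mathlib

/-- For solutions of the geodesic-type system `x'' = −K_x·(x')²`,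
`y'' = K_y·(y')²` with positive `x'`, `y'`, the quantity
`log(y') − log(x') − K(x,y)` is a first integral; in particular the relation
`y' = exp(K(x,y))·x'` propagates from one point to the whole interval. -/
theorem stmt_3 (K : ℝ × ℝ → ℝ) (hK : ContDiff ℝ 1 K)
    (I : Set ℝ) (hI : IsOpen I) (hIconn : IsPreconnected I)
    (x y x' y' x'' y'' : ℝ → ℝ)
    (hx : ∀ s ∈ I, HasDerivAt x (x' s) s)
    (hy : ∀ s ∈ I, HasDerivAt y (y' s) s)
    (hx' : ∀ s ∈ I, HasDerivAt x' (x'' s) s)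
    (hy' : ∀ s ∈ I, HasDerivAt y' (y'' s) s)
    (hxpos : ∀ s ∈ I, 0 < x' s) (hypos : ∀ s ∈ I, 0 < y' s)
    (heq1 : ∀ s ∈ I, x'' s = -(fderiv ℝ K (x s, y s) (1, 0)) * (x' s) ^ 2)
    (heq2 : ∀ s ∈ I, y'' s = fderiv ℝ K (x s, y s) (0, 1) * (y' s) ^ 2) :
    (∀ s ∈ I, ∀ t ∈ I,
      Real.log (y' s) - Real.log (x' s) - K (x s, y s)
        = Real.log (y' t) - Real.log (x' t) - K (x t, y t)) ∧
    (∀ s₀ ∈ I, y' s₀ = Real.exp (K (x s₀, y s₀)) * x' s₀ →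
      ∀ s ∈ I, y' s = Real.exp (K (x s, y s)) * x' s) := by
  set F : ℝ → ℝ := fun s => Real.log (y' s) - Real.log (x' s) - K (x s, y s) with hF
  have hderiv : ∀ s ∈ I, HasDerivAt F 0 s := by
    intro s hs
    have hxp := hxpos s hs
    have hyp := hypos s hs
    have hlogy : HasDerivAt (fun t => Real.log (y' t)) (y'' s / y' s) s :=
      (hy' s hs).log hyp.ne'
    have hlogx : HasDerivAt (fun t => Real.log (x' t)) (x'' s / x' s) s :=
      (hx' s hs).log hxp.ne'
    have hKd : HasFDerivAt K (fderiv ℝ K (x s, y s)) (x s, y s) :=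
      (hK.differentiable one_ne_zero (x s, y s)).hasFDerivAt
    have hcomp : HasDerivAt (fun t => K (x t, y t))
        (fderiv ℝ K (x s, y s) (x' s, y' s)) s :=
      hKd.comp_hasDerivAt s ((hx s hs).prodMk (hy s hs))
    have h := (hlogy.sub hlogx).sub hcomp
    have hlin : fderiv ℝ K (x s, y s) (x' s, y' s)
        = x' s * fderiv ℝ K (x s, y s) (1, 0) + y' s * fderiv ℝ K (x s, y s) (0, 1) := by
      have : (x' s, y' s) = x' s • ((1 : ℝ), (0 : ℝ)) + y' s • ((0 : ℝ), (1 : ℝ)) := by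
        simp [Prod.ext_iff]
      rw [this, map_add, map_smul, map_smul]
      simp [smul_eq_mul]
    have hzero : y'' s / y' s - x'' s / x' s - fderiv ℝ K (x s, y s) (x' s, y' s) = 0 := by
      rw [heq1 s hs, heq2 s hs, hlin]
      field_simp
      ring
    rw [hF]
    exact hzero ▸ h
  have hconv : Convex ℝ I := hIconn.convex
  have hdiff : DifferentiableOn ℝ F I := fun s hs => ((hderiv s hs).differentiableAt).differentiableWithinAt
  have hfd : ∀ s ∈ I, fderivWithin ℝ F I s = 0 := by
    intro s hs
    rw [fderivWithin_of_isOpen hI hs, (hderiv s hs).hasFDerivAt.fderiv]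
    ext
    simp
  have hconst : ∀ s ∈ I, ∀ t ∈ I, F s = F t := fun s hs t ht =>
    hconv.is_const_of_fderivWithin_eq_zero hdiff hfd hs ht
  refine ⟨hconst, ?_⟩
  intro s₀ hs₀ h0 s hs
  have h1 : F s = F s₀ := hconst s hs s₀ hs₀
  have h2 : F s₀ = 0 := by
    rw [hF]
    simp only
    rw [h0, Real.log_mul (Real.exp_pos _).ne' (hxpos s₀ hs₀).ne', Real.log_exp]
    ring
  have h3 : Real.log (y' s) = K (x s, y s) + Real.log (x' s) := by
    have := h1.trans h2
    rw [hF] at this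
    simp only at this
    linarith
  have := congrArg Real.exp h3
  rwa [Real.exp_log (hypos s hs), Real.exp_add, Real.exp_log (hxpos s hs)] at this
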